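/- Let k be a field, n a positive integer, and q : GL_n(k) → PGL_n(k) the natural projection. If G is a subgroup of GL_n(k) such that PSL_n(k) ≤ q(G), then SL_n(k) ≤ G. -/

import Mathlib

open scoped commutatorElement

section StmtZeroAux

variable {k : Type*} [Field k] {n : ℕ}

private lemma stmt0_comm_central {H : Type*} [Group H] {g₁ g₂ z₁ z₂ : H}
    (h₁ : z₁ ∈ Subgroup.center H) (h₂ : z₂ ∈ Subgroup.center H) :
    ⁅g₁ * z₁, g₂ * z₂⁆ = ⁅g₁, g₂⁆ := by
  have key : ∀ z : H, z ∈ Subgroup.center H → ∀ a b w : H, a * z * (b * w) = a * b * (z * w) := by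
    intro z hz a b w
    have hc := Subgroup.mem_center_iff.mp hz b
    rw [mul_assoc a z, ← mul_assoc z b, ← hc, mul_assoc b z, ← mul_assoc a b]
  have h₁' : z₁⁻¹ ∈ Subgroup.center H := (Subgroup.center H).inv_mem h₁
  have h₂' : z₂⁻¹ ∈ Subgroup.center H := (Subgroup.center H).inv_mem h₂
  have h12 : z₁ * z₂ ∈ Subgroup.center H := (Subgroup.center H).mul_mem h₁ h₂
  have hA : (g₁ * z₁)⁻¹ = g₁⁻¹ * z₁⁻¹ := by
    rw [_root_.mul_inv_rev, Subgroup.mem_center_iff.mp h₁' g₁⁻¹]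
  have hB : (g₂ * z₂)⁻¹ = g₂⁻¹ * z₂⁻¹ := by
    rw [_root_.mul_inv_rev, Subgroup.mem_center_iff.mp h₂' g₂⁻¹]
  have hz : z₁ * z₂ * (z₁⁻¹ * z₂⁻¹) = 1 := by
    rw [Subgroup.mem_center_iff.mp h₂ z₁, mul_assoc, ← mul_assoc z₁ z₁⁻¹]
    group
  calc ⁅g₁ * z₁, g₂ * z₂⁆ = g₁ * z₁ * (g₂ * z₂) * ((g₁ * z₁)⁻¹ * (g₂ * z₂)⁻¹) := by
        rw [commutatorElement_def, mul_assoc _ _ ((g₂ * z₂)⁻¹)]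
    _ = g₁ * g₂ * (z₁ * z₂) * (g₁⁻¹ * g₂⁻¹ * (z₁⁻¹ * z₂⁻¹)) := by
        rw [key z₁ h₁, hA, hB, key z₁⁻¹ h₁']
    _ = g₁ * g₂ * (g₁⁻¹ * g₂⁻¹) * (z₁ * z₂ * (z₁⁻¹ * z₂⁻¹)) := key _ h12 _ _ _
    _ = ⁅g₁, g₂⁆ := by rw [hz, mul_one, commutatorElement_def]; group

private lemma stmt0_center_scalar {z : GL (Fin n) k} (hz : z ∈ Subgroup.center (GL (Fin n) k)) :
    ∃ r : k, (z : Matrix (Fin n) (Fin n) k) = Matrix.scalar (Fin n) r := by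
  have hh := Matrix.mem_range_scalar_of_commute_transvectionStruct
      (M := (z : Matrix (Fin n) (Fin n) k)) ?_
  · obtain ⟨r, hr⟩ := hh; exact ⟨r, hr.symm⟩
  intro t
  have ht : Matrix.TransvectionStruct.toMatrix t = ((Matrix.SpecialLinearGroup.toGL
      (⟨t.toMatrix, t.det⟩ : Matrix.SpecialLinearGroup (Fin n) k) : GL (Fin n) k) :
      Matrix (Fin n) (Fin n) k) := rfl
  rw [Commute, SemiconjBy, ht]
  have := Subgroup.mem_center_iff.mp hz (Matrix.SpecialLinearGroup.toGL ⟨t.toMatrix, t.det⟩)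
  exact_mod_cast congrArg Units.val this

private lemma stmt0_decomp {G : Subgroup (GL (Fin n) k)}
    (h : Subgroup.map (QuotientGroup.mk' (Subgroup.center (GL (Fin n) k)))
        (Matrix.SpecialLinearGroup.toGL (n := Fin n) (R := k)).range ≤
      Subgroup.map (QuotientGroup.mk' (Subgroup.center (GL (Fin n) k))) G)
    (s : Matrix.SpecialLinearGroup (Fin n) k) :
    ∃ g ∈ G, ∃ z ∈ Subgroup.center (GL (Fin n) k), Matrix.SpecialLinearGroup.toGL s = g * z := by
  have hs : (QuotientGroup.mk' (Subgroup.center (GL (Fin n) k)))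
      (Matrix.SpecialLinearGroup.toGL s) ∈
      Subgroup.map (QuotientGroup.mk' (Subgroup.center (GL (Fin n) k))) G :=
    h ⟨_, ⟨s, rfl⟩, rfl⟩
  obtain ⟨g, hg, hgs⟩ := hs
  obtain ⟨z, hz, hgz⟩ := (QuotientGroup.mk'_eq_mk' _).mp hgs
  exact ⟨g, hg, z, hz, hgz.symm⟩

private lemma stmt0_commK {G : Subgroup (GL (Fin n) k)}
    (h : Subgroup.map (QuotientGroup.mk' (Subgroup.center (GL (Fin n) k)))
        (Matrix.SpecialLinearGroup.toGL (n := Fin n) (R := k)).range ≤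
      Subgroup.map (QuotientGroup.mk' (Subgroup.center (GL (Fin n) k))) G)
    (x y : Matrix.SpecialLinearGroup (Fin n) k) :
    ⁅Matrix.SpecialLinearGroup.toGL x, Matrix.SpecialLinearGroup.toGL y⁆ ∈ G := by
  obtain ⟨g₁, hg₁, z₁, hz₁, e₁⟩ := stmt0_decomp h x
  obtain ⟨g₂, hg₂, z₂, hz₂, e₂⟩ := stmt0_decomp h y
  rw [e₁, e₂, stmt0_comm_central hz₁ hz₂, commutatorElement_def]
  exact G.mul_mem (G.mul_mem (G.mul_mem hg₁ hg₂) (G.inv_mem hg₁)) (G.inv_mem hg₂)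

private def stmt0_dg (i j : Fin n) (a : k) : Fin n → k :=
  fun x => if x = i then a else if x = j then a⁻¹ else 1

private lemma stmt0_dg_det {i j : Fin n} (hij : i ≠ j) {a : k} (ha : a ≠ 0) :
    Matrix.det (Matrix.diagonal (stmt0_dg i j a)) = 1 := by
  rw [Matrix.det_diagonal]
  have : stmt0_dg i j a = Function.update (Function.update (fun _ => (1:k)) j a⁻¹) i a := by
    funext x
    rcases eq_or_ne x i with rfl | hxi
    · simp [stmt0_dg]
    · rcases eq_or_ne x j with rfl | hxj
      · simp [stmt0_dg, hxi, Function.update_apply, hij.symm]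
      · simp [stmt0_dg, hxi, hxj, Function.update_apply]
  rw [this, Finset.prod_update_of_mem (Finset.mem_univ i),
    Finset.prod_update_of_mem (by simp [hij.symm] : j ∈ Finset.univ \ {i})]
  field_simp
  simp

private lemma stmt0_dg_prod {i j : Fin n} (hij : i ≠ j) {a : k} (ha : a ≠ 0) :
    ∏ x, stmt0_dg i j a x = 1 := by
  rw [← Matrix.det_diagonal]; exact stmt0_dg_det hij ha

private lemma stmt0_conj_id {i j : Fin n} (hij : i ≠ j) (a c : k) (ha : a ≠ 0) :
    Matrix.diagonal (stmt0_dg i j a) * Matrix.transvection i j c =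
      Matrix.transvection i j (a ^ 2 * c) * Matrix.diagonal (stmt0_dg i j a) := by
  ext p q
  rw [Matrix.diagonal_mul, Matrix.mul_diagonal]
  simp only [Matrix.transvection, Matrix.add_apply, Matrix.one_apply, Matrix.single,
    Matrix.of_apply, stmt0_dg]
  rcases eq_or_ne p i with hpi | hpi <;> rcases eq_or_ne p j with hpj | hpj <;>
    rcases eq_or_ne q i with hqi | hqi <;> rcases eq_or_ne q j with hqj | hqj <;>
    simp [hpi, hpj, hqi, hqj, hij, hij.symm, Ne.symm] <;>
    field_simp <;> ring

private lemma stmt0_six_transvections {i j : Fin n} (hij : i ≠ j) {a : k} (ha : a ≠ 0) :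
    Matrix.transvection i j a * (Matrix.transvection j i (-a⁻¹) * (Matrix.transvection i j a *
      (Matrix.transvection i j (-1) * (Matrix.transvection j i 1 * Matrix.transvection i j (-1)))))
      = Matrix.diagonal (stmt0_dg i j a) := by
  ext p q
  rcases eq_or_ne p i with hpi | hpi <;> rcases eq_or_ne p j with hpj | hpj <;>
    rcases eq_or_ne q i with hqi | hqi <;> rcases eq_or_ne q j with hqj | hqj <;>
    simp only [Matrix.transvection_mul_apply_same, Matrix.transvection_mul_apply_of_ne,
      hpi, hpj, hqi, hqj, hij, hij.symm, Ne.symm, ne_eq, not_false_eq_true] <;>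
    simp [Matrix.transvection, Matrix.single, Matrix.one_apply, Matrix.diagonal_apply,
      hpi, hpj, hqi, hqj, hij, hij.symm, Ne.symm, stmt0_dg] <;>
    field_simp <;> ring <;> simp

private def stmt0_Tsl (i j : Fin n) (hij : i ≠ j) (c : k) :
    Matrix.SpecialLinearGroup (Fin n) k :=
  ⟨Matrix.transvection i j c, Matrix.det_transvection_of_ne i j hij c⟩

private lemma stmt0_Tsl_mul (i j : Fin n) (hij : i ≠ j) (c d : k) :
    stmt0_Tsl i j hij c * stmt0_Tsl i j hij d = stmt0_Tsl i j hij (c + d) :=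
  Subtype.ext (Matrix.transvection_mul_transvection_same i j hij c d)

private lemma stmt0_Tsl_zero (i j : Fin n) (hij : i ≠ j) :
    stmt0_Tsl i j hij (0 : k) = 1 := by
  apply Subtype.ext
  show Matrix.transvection i j (0 : k) = _
  rw [Matrix.transvection_zero]
  rfl

private lemma stmt0_Tsl_inv (i j : Fin n) (hij : i ≠ j) (c : k) :
    (stmt0_Tsl i j hij c)⁻¹ = stmt0_Tsl i j hij (-c) := by
  apply inv_eq_of_mul_eq_one_right
  rw [stmt0_Tsl_mul, add_neg_cancel, stmt0_Tsl_zero]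


private def stmt0_Dsl (i j : Fin n) (hij : i ≠ j) {a : k} (ha : a ≠ 0) :
    Matrix.SpecialLinearGroup (Fin n) k :=
  ⟨Matrix.diagonal (stmt0_dg i j a), stmt0_dg_det hij ha⟩

-- the diagonal block is a product of six transvections, hence in `G` whenever all
-- transvections are.
private lemma stmt0_Dsl_mem {G : Subgroup (GL (Fin n) k)}
    (TG : ∀ (i j : Fin n) (hij : i ≠ j) (c : k),
      Matrix.SpecialLinearGroup.toGL (stmt0_Tsl i j hij c) ∈ G)
    {i j : Fin n} (hij : i ≠ j) {a : k} (ha : a ≠ 0) :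
    Matrix.SpecialLinearGroup.toGL (stmt0_Dsl i j hij ha) ∈ G := by
  have hsix : stmt0_Dsl i j hij ha = stmt0_Tsl i j hij a * (stmt0_Tsl j i hij.symm (-a⁻¹) *
      (stmt0_Tsl i j hij a * (stmt0_Tsl i j hij (-1) *
      (stmt0_Tsl j i hij.symm 1 * stmt0_Tsl i j hij (-1))))) := by
    apply Subtype.ext
    simp only [Matrix.SpecialLinearGroup.coe_mul]
    exact (stmt0_six_transvections hij ha).symm
  rw [hsix]
  simp only [_root_.map_mul]
  exact G.mul_mem (TG _ _ _ _) (G.mul_mem (TG _ _ _ _) (G.mul_mem (TG _ _ _ _)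
    (G.mul_mem (TG _ _ _ _) (G.mul_mem (TG _ _ _ _) (TG _ _ _ _)))))

end StmtZeroAux
section StmtZeroAux2

variable {k : Type*} [Field k] {n : ℕ}

-- Case A: there is a unit whose square is not 1; transvections are commutators.
private lemma stmt0_TG_caseA {G : Subgroup (GL (Fin n) k)}
    (h : Subgroup.map (QuotientGroup.mk' (Subgroup.center (GL (Fin n) k)))
        (Matrix.SpecialLinearGroup.toGL (n := Fin n) (R := k)).range ≤
      Subgroup.map (QuotientGroup.mk' (Subgroup.center (GL (Fin n) k))) G)
    {a : k} (ha : a ≠ 0) (ha2 : a ^ 2 ≠ 1)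
    (i j : Fin n) (hij : i ≠ j) (c : k) :
    Matrix.SpecialLinearGroup.toGL (stmt0_Tsl i j hij c) ∈ G := by
  set c' : k := c / (a ^ 2 - 1) with hc'
  have hsub : a ^ 2 - 1 ≠ 0 := sub_ne_zero.mpr ha2
  have hDT : stmt0_Dsl i j hij ha * stmt0_Tsl i j hij c' =
      stmt0_Tsl i j hij (a ^ 2 * c') * stmt0_Dsl i j hij ha := by
    apply Subtype.ext
    simp only [Matrix.SpecialLinearGroup.coe_mul]
    exact stmt0_conj_id hij a c' ha
  have hcomm : ⁅stmt0_Dsl i j hij ha, stmt0_Tsl i j hij c'⁆ = stmt0_Tsl i j hij c := by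
    rw [commutatorElement_def, hDT, mul_assoc (stmt0_Tsl i j hij (a ^ 2 * c')),
      mul_inv_cancel, mul_one, stmt0_Tsl_inv, stmt0_Tsl_mul]
    congr 1
    rw [hc']
    field_simp
    ring
  have := stmt0_commK h (stmt0_Dsl i j hij ha) (stmt0_Tsl i j hij c')
  rwa [← map_commutatorElement, hcomm] at this

-- In case char k = 2 and all units square to one, the center of GL is trivial.
private lemma stmt0_center_trivial (hn : 0 < n) (hsq : ∀ a : kˣ, (a : k) ^ 2 = 1)
    (h2 : (1 + 1 : k) = 0) {z : GL (Fin n) k} (hz : z ∈ Subgroup.center (GL (Fin n) k)) :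
    z = 1 := by
  obtain ⟨r, hr⟩ := stmt0_center_scalar hz
  have hrd : IsUnit (Matrix.det (z : Matrix (Fin n) (Fin n) k)) :=
    (Matrix.isUnit_iff_isUnit_det _).mp z.isUnit
  rw [hr, Matrix.scalar_apply, Matrix.det_diagonal, Finset.prod_const, Finset.card_univ, Fintype.card_fin] at hrd
  have hru : IsUnit r := (isUnit_pow_iff hn.ne').mp hrd
  have hr2 : r ^ 2 = 1 := by
    have := hsq hru.unit
    rwa [IsUnit.unit_spec] at this
  have hr1 : r = 1 := by
    have hsq0 : (r - 1) ^ 2 = 0 := by linear_combination hr2 + (1 - r) * h2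
    exact sub_eq_zero.mp (sq_eq_zero_iff.mp hsq0)
  apply Units.ext
  rw [hr, hr1]
  exact map_one _

-- In the remaining case (all units square to one, char ≠ 2, so char 3), central
-- elements square to one.
private lemma stmt0_center_sq (hn : 0 < n) (hsq : ∀ a : kˣ, (a : k) ^ 2 = 1)
    {z : GL (Fin n) k} (hz : z ∈ Subgroup.center (GL (Fin n) k)) :
    z * z = 1 := by
  obtain ⟨r, hr⟩ := stmt0_center_scalar hz
  have hrd : IsUnit (Matrix.det (z : Matrix (Fin n) (Fin n) k)) :=
    (Matrix.isUnit_iff_isUnit_det _).mp z.isUnit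
  rw [hr, Matrix.scalar_apply, Matrix.det_diagonal, Finset.prod_const, Finset.card_univ, Fintype.card_fin] at hrd
  have hru : IsUnit r := (isUnit_pow_iff hn.ne').mp hrd
  have hr2 : r ^ 2 = 1 := by
    have := hsq hru.unit
    rwa [IsUnit.unit_spec] at this
  apply Units.ext
  show ((z * z : GL (Fin n) k) : Matrix (Fin n) (Fin n) k) = 1
  push_cast
  rw [hr, ← map_mul, ← sq, hr2, map_one]

-- Case B2 : char 3 case, transvections have order 3.
private lemma stmt0_TG_caseB2 {G : Subgroup (GL (Fin n) k)} (hn : 0 < n)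
    (h : Subgroup.map (QuotientGroup.mk' (Subgroup.center (GL (Fin n) k)))
        (Matrix.SpecialLinearGroup.toGL (n := Fin n) (R := k)).range ≤
      Subgroup.map (QuotientGroup.mk' (Subgroup.center (GL (Fin n) k))) G)
    (hsq : ∀ a : kˣ, (a : k) ^ 2 = 1) (h3 : (1 + 1 + 1 : k) = 0)
    (i j : Fin n) (hij : i ≠ j) (c : k) :
    Matrix.SpecialLinearGroup.toGL (stmt0_Tsl i j hij c) ∈ G := by
  obtain ⟨g, hg, z, hz, e⟩ := stmt0_decomp h (stmt0_Tsl i j hij c)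
  have hT3 : stmt0_Tsl i j hij c ^ 3 = 1 := by
    have : stmt0_Tsl i j hij c ^ 3 = stmt0_Tsl i j hij (c + c + c) := by
      rw [pow_succ, pow_two, stmt0_Tsl_mul, stmt0_Tsl_mul]
    rw [this, show c + c + c = (0 : k) by linear_combination c * h3, stmt0_Tsl_zero]
  have hz2 : z * z = 1 := stmt0_center_sq hn hsq hz
  have hz4 : z ^ 4 = 1 := by
    rw [show (4 : ℕ) = 2 * 2 from rfl, pow_mul, sq z, hz2, one_pow]
  have hcz : Commute g z := Subgroup.mem_center_iff.mp hz g
  have key : Matrix.SpecialLinearGroup.toGL (stmt0_Tsl i j hij c) = g ^ 4 := by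
    calc Matrix.SpecialLinearGroup.toGL (stmt0_Tsl i j hij c)
        = Matrix.SpecialLinearGroup.toGL (stmt0_Tsl i j hij c ^ 3 * stmt0_Tsl i j hij c) := by
          rw [hT3, one_mul]
      _ = Matrix.SpecialLinearGroup.toGL (stmt0_Tsl i j hij c) ^ 4 := by
          rw [← pow_succ, map_pow]
      _ = (g * z) ^ 4 := by rw [e]
      _ = g ^ 4 * z ^ 4 := hcz.mul_pow 4
      _ = g ^ 4 := by rw [hz4, mul_one]
  rw [key]
  exact G.pow_mem hg 4

end StmtZeroAux2
section StmtZeroAux3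

open scoped Classical

variable {k : Type*} [Field k] {n : ℕ}

private lemma stmt0_diag_mem {G : Subgroup (GL (Fin n) k)}
    (TG : ∀ (i j : Fin n) (hij : i ≠ j) (c : k),
      Matrix.SpecialLinearGroup.toGL (stmt0_Tsl i j hij c) ∈ G) :
    ∀ (N : ℕ) (d : Fin n → k) (hd : Matrix.det (Matrix.diagonal d) = 1),
      (Finset.univ.filter fun x => d x ≠ 1).card ≤ N →
      Matrix.SpecialLinearGroup.toGL (⟨Matrix.diagonal d, hd⟩ :
        Matrix.SpecialLinearGroup (Fin n) k) ∈ G := by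
  intro N
  induction N with
  | zero =>
    intro d hd hcard
    have hall : ∀ x, d x = 1 := by
      intro x
      by_contra hx
      have : x ∈ Finset.univ.filter fun x => d x ≠ 1 := Finset.mem_filter.mpr ⟨Finset.mem_univ x, hx⟩
      have := Finset.card_pos.mpr ⟨x, this⟩
      omega
    have hone : (⟨Matrix.diagonal d, hd⟩ : Matrix.SpecialLinearGroup (Fin n) k) =
        (1 : Matrix.SpecialLinearGroup (Fin n) k) := by
      apply Subtype.ext
      show Matrix.diagonal d =
        ((1 : Matrix.SpecialLinearGroup (Fin n) k) : Matrix (Fin n) (Fin n) k)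
      rw [Matrix.SpecialLinearGroup.coe_one, show d = fun _ => (1:k) from funext hall]
      exact Matrix.diagonal_one
    rw [hone, map_one]
    exact G.one_mem
  | succ N ih =>
    intro d hd hcard
    by_cases hall : ∀ x, d x = 1
    · have hone : (⟨Matrix.diagonal d, hd⟩ : Matrix.SpecialLinearGroup (Fin n) k) =
          (1 : Matrix.SpecialLinearGroup (Fin n) k) := by
        apply Subtype.ext
        show Matrix.diagonal d =
          ((1 : Matrix.SpecialLinearGroup (Fin n) k) : Matrix (Fin n) (Fin n) k)
        rw [Matrix.SpecialLinearGroup.coe_one, show d = fun _ => (1:k) from funext hall]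
        exact Matrix.diagonal_one
      rw [hone, map_one]
      exact G.one_mem
    push_neg at hall
    obtain ⟨i, hi⟩ := hall
    have hprod : ∏ x, d x = 1 := by rwa [Matrix.det_diagonal] at hd
    have hdi0 : d i ≠ 0 := by
      intro h0
      have : ∏ x, d x = 0 := Finset.prod_eq_zero (Finset.mem_univ i) h0
      rw [hprod] at this
      exact one_ne_zero this
    have hex : ∃ jj : Fin n, d jj ≠ 1 ∧ jj ≠ i := by
      by_contra hc
      push_neg at hc
      have : ∏ x, d x = d i := by
        apply Finset.prod_eq_single i
        · intro b _ hb
          by_contra hb1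
          exact hb (hc b hb1)
        · intro hnot; exact absurd (Finset.mem_univ i) hnot
      rw [hprod] at this
      exact hi this.symm
    obtain ⟨j, hdj, hji⟩ := hex
    have hij : i ≠ j := hji.symm
    set e : Fin n → k := Function.update (Function.update d i 1) j (d j * d i) with he
    have hei : e i = 1 := by
      rw [he, Function.update_of_ne hij, Function.update_self]
    have hej : e j = d j * d i := by
      rw [he, Function.update_self]
    have hex' : ∀ x, x ≠ i → x ≠ j → e x = d x := by
      intro x hxi hxj
      rw [he, Function.update_of_ne hxj, Function.update_of_ne hxi]
    have hsplit : ∀ x, d x = e x * stmt0_dg i j (d i) x := by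
      intro x
      rcases eq_or_ne x i with rfl | hxi
      · rw [hei, one_mul]
        simp [stmt0_dg]
      · rcases eq_or_ne x j with rfl | hxj
        · rw [hej]
          simp [stmt0_dg, hxi, mul_assoc, mul_inv_cancel₀ hdi0]
        · rw [hex' x hxi hxj]
          simp [stmt0_dg, hxi, hxj]
    have hprode : ∏ x, e x = 1 := by
      have h1 : ∏ x, d x = (∏ x, e x) * ∏ x, stmt0_dg i j (d i) x := by
        rw [← Finset.prod_mul_distrib]
        exact Finset.prod_congr rfl fun x _ => hsplit x
      rw [hprod, stmt0_dg_prod hij hdi0, mul_one] at h1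
      exact h1.symm
    have hdete : Matrix.det (Matrix.diagonal e) = 1 := by
      rw [Matrix.det_diagonal]; exact hprode
    have hcarde : (Finset.univ.filter fun x => e x ≠ 1).card ≤ N := by
      have hsub : (Finset.univ.filter fun x => e x ≠ 1) ⊆
          (Finset.univ.filter fun x => d x ≠ 1).erase i := by
        intro x hx
        obtain ⟨-, hx1⟩ := Finset.mem_filter.mp hx
        have hxi : x ≠ i := by
          intro hxi; rw [hxi, hei] at hx1; exact hx1 rfl
        refine Finset.mem_erase.mpr ⟨hxi, Finset.mem_filter.mpr ⟨Finset.mem_univ x, ?_⟩⟩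
        rcases eq_or_ne x j with rfl | hxj
        · exact hdj
        · rwa [← hex' x hxi hxj]
      have h1 := Finset.card_le_card hsub
      have h2 : i ∈ Finset.univ.filter fun x => d x ≠ 1 :=
        Finset.mem_filter.mpr ⟨Finset.mem_univ i, hi⟩
      rw [Finset.card_erase_of_mem h2] at h1
      have h3 := Finset.card_pos.mpr ⟨i, h2⟩
      omega
    let De : Matrix.SpecialLinearGroup (Fin n) k := ⟨Matrix.diagonal e, hdete⟩
    have hDe : (⟨Matrix.diagonal d, hd⟩ : Matrix.SpecialLinearGroup (Fin n) k) =
        De * stmt0_Dsl i j hij hdi0 := by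
      apply Subtype.ext
      simp only [Matrix.SpecialLinearGroup.coe_mul]
      show Matrix.diagonal d = Matrix.diagonal e * Matrix.diagonal (stmt0_dg i j (d i))
      rw [Matrix.diagonal_mul_diagonal]
      exact congrArg Matrix.diagonal (funext hsplit)
    rw [hDe, map_mul]
    exact G.mul_mem (ih e hdete hcarde) (stmt0_Dsl_mem TG hij hdi0)

private def stmt0_valHom : Matrix.SpecialLinearGroup (Fin n) k →* Matrix (Fin n) (Fin n) k where
  toFun A := A.val
  map_one' := rfl
  map_mul' _ _ := rfl

private lemma stmt0_gen {G : Subgroup (GL (Fin n) k)}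
    (TG : ∀ (i j : Fin n) (hij : i ≠ j) (c : k),
      Matrix.SpecialLinearGroup.toGL (stmt0_Tsl i j hij c) ∈ G)
    (s : Matrix.SpecialLinearGroup (Fin n) k) :
    Matrix.SpecialLinearGroup.toGL s ∈ G := by
  obtain ⟨L, L', D, hdec⟩ :=
    Matrix.Pivot.exists_list_transvec_mul_diagonal_mul_list_transvec (s.val)
  have hdetD : Matrix.det (Matrix.diagonal D) = 1 := by
    have h1 : Matrix.det (s.val) = 1 := s.prop
    rw [hdec, Matrix.det_mul, Matrix.det_mul, Matrix.TransvectionStruct.det_toMatrix_prod,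
      Matrix.TransvectionStruct.det_toMatrix_prod, one_mul, mul_one] at h1
    exact h1
  -- SL-level versions of the transvections
  let Tslt : Matrix.TransvectionStruct (Fin n) k → Matrix.SpecialLinearGroup (Fin n) k :=
    fun t => stmt0_Tsl t.i t.j t.hij t.c
  have hvalT : ∀ t : Matrix.TransvectionStruct (Fin n) k,
      (Tslt t).val = Matrix.TransvectionStruct.toMatrix t := fun t => rfl
  let Dd : Matrix.SpecialLinearGroup (Fin n) k := ⟨Matrix.diagonal D, hdetD⟩
  have hs : s = (L.map Tslt).prod * Dd * (L'.map Tslt).prod := by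
    apply Subtype.ext
    have hval : ∀ M : List (Matrix.TransvectionStruct (Fin n) k),
        ((M.map Tslt).prod).val = (M.map Matrix.TransvectionStruct.toMatrix).prod := by
      intro M
      have := map_list_prod (stmt0_valHom (k := k) (n := n)) (M.map Tslt)
      rw [List.map_map] at this
      exact this
    show s.val = _
    rw [Matrix.SpecialLinearGroup.coe_mul, Matrix.SpecialLinearGroup.coe_mul, hval, hval]
    exact hdec
  rw [hs, map_mul, map_mul]
  have hmemL : ∀ (M : List (Matrix.TransvectionStruct (Fin n) k)),
      Matrix.SpecialLinearGroup.toGL ((M.map Tslt).prod) ∈ G := by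
    intro M
    rw [map_list_prod, List.map_map]
    apply Subgroup.list_prod_mem
    intro x hx
    obtain ⟨t, _, rfl⟩ := List.mem_map.mp hx
    exact TG t.i t.j t.hij t.c
  exact G.mul_mem (G.mul_mem (hmemL L) (stmt0_diag_mem TG _ D hdetD le_rfl)) (hmemL L')

end StmtZeroAux3
/-- Let `k` be a field, `n` a positive integer, and
`q : GL_n(k) → PGL_n(k)` the natural projection (quotient by the center).
If `G ≤ GL_n(k)` satisfies `PSL_n(k) ≤ q(G)` (where `PSL_n(k)` is the image of
`SL_n(k)` in `PGL_n(k)`), then `SL_n(k) ≤ G`. -/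
theorem stmt_0 {k : Type*} [Field k] {n : ℕ} (hn : 0 < n)
    (G : Subgroup (GL (Fin n) k))
    (h : Subgroup.map (QuotientGroup.mk' (Subgroup.center (GL (Fin n) k)))
        (Matrix.SpecialLinearGroup.toGL (n := Fin n) (R := k)).range ≤
      Subgroup.map (QuotientGroup.mk' (Subgroup.center (GL (Fin n) k))) G) :
    (Matrix.SpecialLinearGroup.toGL (n := Fin n) (R := k)).range ≤ G := by
  intro x hx
  obtain ⟨s, rfl⟩ := MonoidHom.mem_range.mp hx
  by_cases hA : ∃ a : k, a ≠ 0 ∧ a ^ 2 ≠ 1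
  · obtain ⟨a, ha, ha2⟩ := hA
    exact stmt0_gen (fun i j hij c => stmt0_TG_caseA h ha ha2 i j hij c) s
  · push_neg at hA
    have hsq : ∀ a : kˣ, (a : k) ^ 2 = 1 := fun a => hA a a.ne_zero
    by_cases h2 : (1 + 1 : k) = 0
    · -- trivial center: the decomposition directly gives membership
      obtain ⟨g, hg, z, hz, e⟩ := stmt0_decomp h s
      rw [e, stmt0_center_trivial hn hsq h2 hz, mul_one]
      exact hg
    · -- char 3 case
      have h3 : (1 + 1 + 1 : k) = 0 := by
        have := hA (1 + 1) h2
        linear_combination this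
      exact stmt0_gen (fun i j hij c => stmt0_TG_caseB2 hn h hsq h3 i j hij c) s
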